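/- arXiv:1910.08946 — 2 statements merged into one kernel-verified Lean document; each statement's English description precedes it below -/
import Mathlib

section
/- Let g : (0,∞) → ℝ be convex and differentiable on (0,∞), and let γ : (0,∞) → ℝ be continuous with γ(s) ≠ 0 and γ(s) > −1 for every s > 0. Suppose that for every s > 0 the tangency relation g(s + s·γ(s)) = g(s) + s·γ(s)·g′(s) holds, where g′ denotes the derivative of g. Then g is affine: there exist constants a, b ∈ ℝ such that g(s) = a + b·s for all s > 0. -/
open Set

/-- Sign dichotomy for a continuous nonvanishing function on `(0, ∞)`. -/
lemma aux_sign_dichotomy (γ : ℝ → ℝ) (hc : ContinuousOn γ (Set.Ioi 0))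
    (hne : ∀ s ∈ Set.Ioi (0 : ℝ), γ s ≠ 0) :
    (∀ s ∈ Set.Ioi (0 : ℝ), 0 < γ s) ∨ (∀ s ∈ Set.Ioi (0 : ℝ), γ s < 0) := by
  by_contra h
  push_neg at h
  obtain ⟨⟨a, ha, ha2⟩, ⟨b, hb, hb2⟩⟩ := h
  have ha' : γ a < 0 := lt_of_le_of_ne ha2 (hne a ha)
  have hb' : 0 < γ b := lt_of_le_of_ne hb2 (fun e => hne b hb e.symm)
  rcases lt_or_ge a b with hab | hba
  · have hsub : Icc a b ⊆ Ioi 0 := fun x hx => lt_of_lt_of_le ha hx.1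
    have := intermediate_value_Icc hab.le (hc.mono hsub)
    obtain ⟨c, hc1, hc2⟩ := this ⟨ha'.le, hb'.le⟩
    exact hne c (hsub hc1) hc2
  · have hba' : b ≤ a := hba
    have hsub : Icc b a ⊆ Ioi 0 := fun x hx => lt_of_lt_of_le hb hx.1
    have := intermediate_value_Icc' hba' (hc.mono hsub)
    obtain ⟨c, hc1, hc2⟩ := this ⟨ha'.le, hb'.le⟩
    exact hne c (hsub hc1) hc2

/-- If the tangent line of a convex `g` at `u` meets the graph again at `y0`, then
`deriv g` is constant strictly between `u` and `y0`. -/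
lemma aux_key (g : ℝ → ℝ) (hconv : ConvexOn ℝ (Set.Ioi 0) g)
    (hdiff : ∀ s ∈ Set.Ioi (0 : ℝ), DifferentiableAt ℝ g s)
    {u v y0 : ℝ} (hu : 0 < u) (hy0 : 0 < y0)
    (hline : g y0 = g u + (y0 - u) * deriv g u)
    (hbetween : (u < v ∧ v < y0) ∨ (y0 < v ∧ v < u)) :
    deriv g v = deriv g u := by
  have hu' : u ∈ Ioi (0:ℝ) := hu
  have hy0' : y0 ∈ Ioi (0:ℝ) := hy0
  rcases hbetween with ⟨huv, hvy0⟩ | ⟨hy0v, hvu⟩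
  · -- u < v < y0
    have hv : 0 < v := hu.trans huv
    have hv' : v ∈ Ioi (0:ℝ) := hv
    have h1 : deriv g u ≤ slope g u v :=
      hconv.deriv_le_slope hu' hv' huv (hdiff u hu')
    have h2 : slope g u v ≤ slope g u y0 :=
      (hconv.slope_mono hu') ⟨hv', by simp [huv.ne']⟩ ⟨hy0', by simp [(huv.trans hvy0).ne']⟩ hvy0.le
    have h3 : slope g u y0 = deriv g u := by
      have hne : y0 - u ≠ 0 := sub_ne_zero.mpr (huv.trans hvy0).ne'
      rw [slope_def_field, hline]
      field_simp
      ring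
    have hgv : g v = g u + (v - u) * deriv g u := by
      have hs : slope g u v = deriv g u := le_antisymm (h2.trans h3.le) h1
      rw [slope_def_field] at hs
      have hne : v - u ≠ 0 := sub_ne_zero.mpr huv.ne'
      field_simp at hs
      linarith
    have h4 : slope g v y0 = deriv g u := by
      rw [slope_def_field, hline, hgv]
      have hne : y0 - v ≠ 0 := sub_ne_zero.mpr hvy0.ne'
      field_simp
      ring
    have h5 : slope g u v ≤ deriv g v :=
      hconv.slope_le_deriv hu' hv' huv (hdiff v hv')
    have h6 : deriv g v ≤ slope g v y0 :=
      hconv.deriv_le_slope hv' hy0' hvy0 (hdiff v hv')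
    have hs : slope g u v = deriv g u := le_antisymm (h2.trans h3.le) h1
    linarith [h4 ▸ h6, hs ▸ h5]
  · -- y0 < v < u
    have hv : 0 < v := hy0.trans hy0v
    have hv' : v ∈ Ioi (0:ℝ) := hv
    have h3 : slope g u y0 = deriv g u := by
      rw [slope_comm, slope_def_field, hline]
      have hne : u - y0 ≠ 0 := sub_ne_zero.mpr (hy0v.trans hvu).ne'
      rw [div_eq_iff hne]
      ring
    have h2 : slope g u y0 ≤ slope g u v :=
      (hconv.slope_mono hu') ⟨hy0', by simp [(hy0v.trans hvu).ne]⟩ ⟨hv', by simp [hvu.ne]⟩ hy0v.le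
    have h1 : slope g v u ≤ deriv g u :=
      hconv.slope_le_deriv hv' hu' hvu (hdiff u hu')
    have hcomm : slope g u v = slope g v u := slope_comm g u v
    have hgv : g v = g u + (v - u) * deriv g u := by
      have hs : slope g v u = deriv g u := le_antisymm h1 (h3 ▸ (hcomm ▸ h2))
      rw [slope_def_field] at hs
      have hne : u - v ≠ 0 := sub_ne_zero.mpr hvu.ne'
      field_simp at hs
      linarith
    have h4 : slope g y0 v = deriv g u := by
      rw [slope_def_field, hline, hgv]
      have hne : v - y0 ≠ 0 := sub_ne_zero.mpr hy0v.ne'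
      field_simp
      ring
    have h5 : slope g y0 v ≤ deriv g v :=
      hconv.slope_le_deriv hy0' hv' hy0v (hdiff v hv')
    have h6 : deriv g v ≤ slope g v u :=
      hconv.deriv_le_slope hv' hu' hvu (hdiff v hv')
    have hs : slope g v u = deriv g u := le_antisymm h1 (h3 ▸ (hcomm ▸ h2))
    linarith [h4 ▸ h5, hs ▸ h6]

/-- If `g` is convex and differentiable on `(0,∞)`, `γ` is continuous on
`(0,∞)` with `γ s ≠ 0` and `γ s > -1` for all `s > 0`, and the tangent line of `g` at each
`s > 0` revisits the graph at `s + s·γ s`, then `g` is affine on `(0,∞)`. -/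
theorem tangency_at_jump_implies_affine
    (g γ : ℝ → ℝ)
    (hconv : ConvexOn ℝ (Set.Ioi 0) g)
    (hdiff : ∀ s ∈ Set.Ioi (0 : ℝ), DifferentiableAt ℝ g s)
    (hγcont : ContinuousOn γ (Set.Ioi 0))
    (hγne : ∀ s ∈ Set.Ioi (0 : ℝ), γ s ≠ 0)
    (hγgt : ∀ s ∈ Set.Ioi (0 : ℝ), γ s > -1)
    (htan : ∀ s ∈ Set.Ioi (0 : ℝ),
      g (s + s * γ s) = g s + s * γ s * deriv g s) :
    ∃ a b : ℝ, ∀ s ∈ Set.Ioi (0 : ℝ), g s = a + b * s := by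
  have hline : ∀ s ∈ Set.Ioi (0:ℝ),
      g (s + s * γ s) = g s + ((s + s * γ s) - s) * deriv g s := by
    intro s hs; rw [htan s hs]; ring
  have hy0pos : ∀ s ∈ Set.Ioi (0:ℝ), 0 < s + s * γ s := by
    intro s hs
    have hs' : (0:ℝ) < s := hs
    nlinarith [hγgt s hs]
  -- local constancy of the derivative
  have hloc : ∀ t, 0 < t → ∃ δ > 0, ∀ u, |u - t| < δ → 0 < u ∧ deriv g u = deriv g t := by
    intro t ht
    have ht' : t ∈ Ioi (0:ℝ) := ht
    have hca : ContinuousAt γ t := hγcont.continuousAt (isOpen_Ioi.mem_nhds ht')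
    rcases aux_sign_dichotomy γ hγcont hγne with hpos | hneg
    · set ε := γ t with hε
      have hε0 : 0 < ε := hpos t ht'
      obtain ⟨δ1, hδ1, hδ1p⟩ := Metric.continuousAt_iff.mp hca (ε/2) (by linarith)
      refine ⟨min δ1 (min (t/2) (t*ε/8)), by positivity, ?_⟩
      intro u hu
      have hu1 : |u - t| < δ1 := lt_of_lt_of_le hu (min_le_left _ _)
      have hu2 : |u - t| < t/2 := lt_of_lt_of_le hu ((min_le_right _ _).trans (min_le_left _ _))
      have hu3 : |u - t| < t*ε/8 := lt_of_lt_of_le hu ((min_le_right _ _).trans (min_le_right _ _))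
      rw [abs_lt] at hu2 hu3
      have hupos : 0 < u := by linarith
      have hγu : ε/2 < γ u := by
        have := hδ1p (show dist u t < δ1 by rwa [Real.dist_eq])
        rw [Real.dist_eq, abs_lt] at this
        linarith [this.1]
      refine ⟨hupos, ?_⟩
      rcases lt_trichotomy u t with h | h | h
      · -- base u, v = t, u < t < u + u γ u
        have huI : u ∈ Ioi (0:ℝ) := hupos
        exact (aux_key g hconv hdiff hupos (hy0pos u huI) (hline u huI)
          (Or.inl ⟨h, by nlinarith⟩)).symm
      · rw [h]
      · -- base t, v = u, t < u < t + t γ t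
        exact aux_key g hconv hdiff ht (hy0pos t ht') (hline t ht')
          (Or.inl ⟨h, by nlinarith⟩)
    · set ε := -γ t with hε
      have hε0 : 0 < ε := by have := hneg t ht'; simp only [hε]; linarith
      obtain ⟨δ1, hδ1, hδ1p⟩ := Metric.continuousAt_iff.mp hca (ε/2) (by linarith)
      refine ⟨min δ1 (min (t/2) (t*ε/8)), by positivity, ?_⟩
      intro u hu
      have hu1 : |u - t| < δ1 := lt_of_lt_of_le hu (min_le_left _ _)
      have hu2 : |u - t| < t/2 := lt_of_lt_of_le hu ((min_le_right _ _).trans (min_le_left _ _))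
      have hu3 : |u - t| < t*ε/8 := lt_of_lt_of_le hu ((min_le_right _ _).trans (min_le_right _ _))
      rw [abs_lt] at hu2 hu3
      have hupos : 0 < u := by linarith
      have hγu : γ u < -(ε/2) := by
        have := hδ1p (show dist u t < δ1 by rwa [Real.dist_eq])
        rw [Real.dist_eq, abs_lt] at this
        have h2 := this.2
        simp only [hε] at *
        linarith
      refine ⟨hupos, ?_⟩
      rcases lt_trichotomy u t with h | h | h
      · -- base t, v = u, t + t γ t < u < t
        exact aux_key g hconv hdiff ht (hy0pos t ht') (hline t ht')
          (Or.inr ⟨by nlinarith [hneg t ht'], h⟩)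
      · rw [h]
      · -- base u, v = t, u + u γ u < t < u
        have huI : u ∈ Ioi (0:ℝ) := hupos
        exact (aux_key g hconv hdiff hupos (hy0pos u huI) (hline u huI)
          (Or.inr ⟨by nlinarith, h⟩)).symm
  -- global constancy
  have hconst : ∀ p q : ℝ, 0 < p → p ≤ q → deriv g q = deriv g p := by
    intro p q hp hpq
    set A := {x | x ∈ Icc p q ∧ deriv g x = deriv g p} with hA
    have hpA : p ∈ A := ⟨⟨le_refl p, hpq⟩, rfl⟩
    have hbdd : BddAbove A := ⟨q, fun x hx => hx.1.2⟩
    set c := sSup A with hc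
    have hcq : c ≤ q := csSup_le ⟨p, hpA⟩ (fun x hx => hx.1.2)
    have hpc : p ≤ c := le_csSup hbdd hpA
    have hc0 : 0 < c := lt_of_lt_of_le hp hpc
    obtain ⟨δ, hδ, hball⟩ := hloc c hc0
    obtain ⟨x, hxA, hx⟩ := exists_lt_of_lt_csSup ⟨p, hpA⟩ (show c - δ < c by linarith)
    have hxc : x ≤ c := le_csSup hbdd hxA
    have hfc : deriv g c = deriv g p := by
      have habs : |x - c| < δ := by rw [abs_lt]; constructor <;> linarith
      have h1 := (hball x habs).2
      exact h1.symm.trans hxA.2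
    have hcqe : c = q := by
      by_contra hne
      have hcq' : c < q := lt_of_le_of_ne hcq hne
      set v := min q (c + δ/2) with hv
      have hcv : c < v := lt_min hcq' (by linarith)
      have hvA : v ∈ A := by
        refine ⟨⟨hpc.trans hcv.le, min_le_left _ _⟩, ?_⟩
        have hvc2 : v ≤ c + δ/2 := min_le_right _ _
        have habs : |v - c| < δ := by rw [abs_lt]; constructor <;> linarith
        exact ((hball v habs).2).trans hfc
      exact absurd (le_csSup hbdd hvA) (not_le.mpr hcv)
    rw [← hcqe]; exact hfc
  -- conclusion
  set b := deriv g 1 with hb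
  refine ⟨g 1 - b, b, ?_⟩
  intro s hs
  have hs0 : (0:ℝ) < s := hs
  have hfs : deriv g s = b := by
    rcases le_total 1 s with h | h
    · exact hconst 1 s one_pos h
    · exact (hconst s 1 hs0 h).symm
  have h1I : (1:ℝ) ∈ Ioi (0:ℝ) := by norm_num
  rcases lt_trichotomy s 1 with h | h | h
  · have h1 : slope g s 1 ≤ deriv g 1 := hconv.slope_le_deriv hs h1I h (hdiff 1 h1I)
    have h2 : deriv g s ≤ slope g s 1 := hconv.deriv_le_slope hs h1I h (hdiff s hs)
    rw [hfs] at h2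
    have hsl : slope g s 1 = b := le_antisymm h1 h2
    rw [slope_def_field] at hsl
    have hne : (1:ℝ) - s ≠ 0 := sub_ne_zero.mpr h.ne'
    field_simp at hsl
    linarith
  · rw [h]; ring
  · have h1 : deriv g 1 ≤ slope g 1 s := hconv.deriv_le_slope h1I hs h (hdiff 1 h1I)
    have h2 : slope g 1 s ≤ deriv g s := hconv.slope_le_deriv h1I hs h (hdiff s hs)
    rw [hfs] at h2
    have hsl : slope g 1 s = b := le_antisymm h2 h1
    rw [slope_def_field] at hsl
    have hne : s - (1:ℝ) ≠ 0 := sub_ne_zero.mpr h.ne'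
    field_simp at hsl
    linarith
end

section
/- Let g : (0,∞) → ℝ be convex and differentiable on (0,∞), and let γ₁, γ₂ : (0,∞) → ℝ be continuous functions with γ₁(s) ≠ 0, γ₂(s) ≠ 0, γ₁(s) > −1, γ₂(s) > −1, and γ₁(s) ≠ γ₂(s) for every s > 0. Suppose that for every s > 0 the difference quotients of g from s along the two displacements agree: (g(s + s·γ₁(s)) − g(s))/(s·γ₁(s)) = (g(s + s·γ₂(s)) − g(s))/(s·γ₂(s)). Then g is affine: there exist constants a, b ∈ ℝ such that g(s) = a + b·s for all s > 0. -/
open Set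

/-- If a convex function has equal secant slopes from `a` to two points `p < q`,
then it is affine on the whole interval spanned by `a, p, q`. -/
lemma affine_of_secant_eq (g : ℝ → ℝ) (hconv : ConvexOn ℝ (Set.Ioi 0) g)
    {a p q : ℝ} (ha : a ∈ Set.Ioi (0:ℝ)) (hp : p ∈ Set.Ioi (0:ℝ)) (hq : q ∈ Set.Ioi (0:ℝ))
    (hpa : p ≠ a) (hqa : q ≠ a) (hpq : p < q)
    (heq : (g p - g a) / (p - a) = (g q - g a) / (q - a)) :
    ∀ t ∈ Set.Icc (min a p) (max a q),
      g t = g a + (g p - g a) / (p - a) * (t - a) := by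
  obtain ⟨c, hc⟩ : ∃ c, c = (g p - g a) / (p - a) := ⟨_, rfl⟩
  rw [← hc] at heq ⊢
  have hgp : g p = g a + c * (p - a) := by
    rw [hc, div_mul_cancel₀ _ (sub_ne_zero.mpr hpa)]; ring
  have hgq : g q = g a + c * (q - a) := by
    rw [heq, div_mul_cancel₀ _ (sub_ne_zero.mpr hqa)]; ring
  have hqpd : g q - g p = c * (q - p) := by rw [hgp, hgq]; ring
  have hpqc : (g q - g p) / (q - p) = c := by
    rw [hqpd, mul_div_cancel_right₀ _ (sub_ne_zero.mpr hpq.ne')]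
  intro t ht
  obtain ⟨ht1, ht2⟩ := ht
  by_cases hta : t = a
  · subst hta; ring
  have htpos : t ∈ Set.Ioi (0:ℝ) := lt_of_lt_of_le (lt_min ha hp) ht1
  rcases lt_trichotomy t p with h1 | rfl | h1
  · -- t < p, so a < t < p
    have hat : a < t := by
      by_contra h
      push_neg at h
      have : t < a := lt_of_le_of_ne h hta
      exact absurd ht1 (not_le.mpr (lt_min this h1))
    have hub := hconv.secant_mono ha htpos hp hta hpa h1.le
    rw [← hc] at hub
    have hub' : g t - g a ≤ c * (t - a) := by
      rwa [div_le_iff₀ (by linarith : (0:ℝ) < t - a)] at hub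
    have hlb := hconv.secant_mono hp htpos hq h1.ne hpq.ne' (by linarith : t ≤ q)
    rw [hpqc] at hlb
    have hlb' : c * (t - p) ≤ g t - g p := by
      rwa [div_le_iff_of_neg (by linarith : t - p < 0)] at hlb
    have hring : c * (t - p) + c * (p - a) = c * (t - a) := by ring
    linarith [hgp]
  · exact hgp
  rcases lt_trichotomy t q with h2 | rfl | h2
  · -- p < t < q: squeeze slopes from a
    have l1 := hconv.secant_mono ha hp htpos hpa hta h1.le
    have l2 := hconv.secant_mono ha htpos hq hta hqa h2.le
    rw [← hc] at l1
    rw [← heq] at l2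
    have heqt : (g t - g a) / (t - a) = c := le_antisymm l2 l1
    have := (div_eq_iff (sub_ne_zero.mpr hta)).mp heqt
    linarith
  · exact hgq
  · -- q < t, so q < t < a
    have hta' : t < a := by
      by_contra h
      push_neg at h
      have : a < t := lt_of_le_of_ne h (Ne.symm hta)
      exact absurd ht2 (not_le.mpr (max_lt this h2))
    have hub := hconv.secant_mono ha hq htpos hqa hta (by linarith : q ≤ t)
    rw [← heq] at hub
    have hub' : g t - g a ≤ c * (t - a) := by
      rwa [le_div_iff_of_neg (by linarith : t - a < 0)] at hub
    have hlb := hconv.secant_mono hq hp htpos hpq.ne h2.ne' (by linarith : p ≤ t)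
    have hqp : (g p - g q) / (p - q) = c := by
      have : g p - g q = c * (p - q) := by rw [hgp, hgq]; ring
      rw [this, mul_div_cancel_right₀ _ (sub_ne_zero.mpr hpq.ne)]
    rw [hqp] at hlb
    have hlb' : c * (t - q) ≤ g t - g q := by
      rwa [le_div_iff₀ (by linarith : (0:ℝ) < t - q)] at hlb
    have hring : c * (t - q) + c * (q - a) = c * (t - a) := by ring
    linarith [hgq]

/-- derivative is constant on the open interval spanned by `x, y₁, y₂`. -/
lemma deriv_const_on_span (g : ℝ → ℝ) (hconv : ConvexOn ℝ (Set.Ioi 0) g)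
    {x y₁ y₂ : ℝ} (hx : x ∈ Set.Ioi (0:ℝ)) (hy₁ : y₁ ∈ Set.Ioi (0:ℝ)) (hy₂ : y₂ ∈ Set.Ioi (0:ℝ))
    (h1 : y₁ ≠ x) (h2 : y₂ ≠ x) (h12 : y₁ ≠ y₂)
    (heq : (g y₁ - g x) / (y₁ - x) = (g y₂ - g x) / (y₂ - x)) :
    ∀ t ∈ Set.Ioo (min x (min y₁ y₂)) (max x (max y₁ y₂)),
      deriv g t = (g y₁ - g x) / (y₁ - x) := by
  have main : ∀ p q : ℝ, p ∈ Set.Ioi (0:ℝ) → q ∈ Set.Ioi (0:ℝ) → p ≠ x → q ≠ x → p < q →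
      (g p - g x) / (p - x) = (g q - g x) / (q - x) →
      ∀ t ∈ Set.Ioo (min x p) (max x q), deriv g t = (g p - g x) / (p - x) := by
    intro p q hp hq hpx hqx hpq heq' t ht
    have key := affine_of_secant_eq g hconv hx hp hq hpx hqx hpq heq'
    have hEq : g =ᶠ[nhds t] (fun z => g x + (g p - g x) / (p - x) * (z - x)) :=
      Filter.eventuallyEq_of_mem (Ioo_mem_nhds ht.1 ht.2)
        (fun z hz => key z ⟨hz.1.le, hz.2.le⟩)
    have hA : HasDerivAt (fun z => g x + (g p - g x) / (p - x) * (z - x))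
        ((g p - g x) / (p - x)) t := by
      simpa using (((hasDerivAt_id t).sub_const x).const_mul ((g p - g x) / (p - x))).const_add (g x)
    rw [hEq.deriv_eq, hA.deriv]
  rcases h12.lt_or_gt with h | h
  · intro t ht
    rw [min_eq_left h.le, max_eq_right h.le] at ht
    exact main y₁ y₂ hy₁ hy₂ h1 h2 h heq t ht
  · intro t ht
    rw [min_eq_right h.le, max_eq_left h.le] at ht
    rw [heq]
    exact main y₂ y₁ hy₂ hy₁ h2 h1 h heq.symm t ht

/-- If `g` is convex and differentiable on `(0,∞)`, the continuous functions
`γ₁, γ₂` are nonzero, `> -1`, and pointwise distinct on `(0,∞)`, and the difference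
quotients of `g` from every `s > 0` along the two displacements `s·γ₁ s` and `s·γ₂ s`
agree, then `g` is affine on `(0,∞)`. -/
theorem two_jump_sizes_implies_affine
    (g γ₁ γ₂ : ℝ → ℝ)
    (hconv : ConvexOn ℝ (Set.Ioi 0) g)
    (hdiff : ∀ s ∈ Set.Ioi (0 : ℝ), DifferentiableAt ℝ g s)
    (hγ₁cont : ContinuousOn γ₁ (Set.Ioi 0))
    (hγ₂cont : ContinuousOn γ₂ (Set.Ioi 0))
    (hγ₁ne : ∀ s ∈ Set.Ioi (0 : ℝ), γ₁ s ≠ 0)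
    (hγ₂ne : ∀ s ∈ Set.Ioi (0 : ℝ), γ₂ s ≠ 0)
    (hγ₁gt : ∀ s ∈ Set.Ioi (0 : ℝ), γ₁ s > -1)
    (hγ₂gt : ∀ s ∈ Set.Ioi (0 : ℝ), γ₂ s > -1)
    (hne : ∀ s ∈ Set.Ioi (0 : ℝ), γ₁ s ≠ γ₂ s)
    (hq : ∀ s ∈ Set.Ioi (0 : ℝ),
      (g (s + s * γ₁ s) - g s) / (s * γ₁ s) = (g (s + s * γ₂ s) - g s) / (s * γ₂ s)) :
    ∃ a b : ℝ, ∀ s ∈ Set.Ioi (0 : ℝ), g s = a + b * s := by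
  -- the span lemma applied to each base point x
  have span : ∀ x ∈ Set.Ioi (0:ℝ),
      ∀ t ∈ Set.Ioo (min x (min (x + x * γ₁ x) (x + x * γ₂ x)))
        (max x (max (x + x * γ₁ x) (x + x * γ₂ x))),
      ∀ t' ∈ Set.Ioo (min x (min (x + x * γ₁ x) (x + x * γ₂ x)))
        (max x (max (x + x * γ₁ x) (x + x * γ₂ x))),
      deriv g t = deriv g t' := by
    intro x hx t ht t' ht'
    have hxpos : (0:ℝ) < x := hx
    have hy₁ : x + x * γ₁ x ∈ Set.Ioi (0:ℝ) := by
      have := hγ₁gt x hx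
      have := mul_pos hxpos (by linarith : (0:ℝ) < 1 + γ₁ x)
      simp only [Set.mem_Ioi]; nlinarith
    have hy₂ : x + x * γ₂ x ∈ Set.Ioi (0:ℝ) := by
      have := hγ₂gt x hx
      have := mul_pos hxpos (by linarith : (0:ℝ) < 1 + γ₂ x)
      simp only [Set.mem_Ioi]; nlinarith
    have h1 : x + x * γ₁ x ≠ x := by
      have := mul_ne_zero hxpos.ne' (hγ₁ne x hx)
      intro hcon; apply this; linarith
    have h2 : x + x * γ₂ x ≠ x := by
      have := mul_ne_zero hxpos.ne' (hγ₂ne x hx)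
      intro hcon; apply this; linarith
    have h12 : x + x * γ₁ x ≠ x + x * γ₂ x := by
      intro hcon
      apply hne x hx
      have : x * γ₁ x = x * γ₂ x := by linarith
      exact mul_left_cancel₀ hxpos.ne' this
    have heq' : (g (x + x * γ₁ x) - g x) / ((x + x * γ₁ x) - x)
        = (g (x + x * γ₂ x) - g x) / ((x + x * γ₂ x) - x) := by
      rw [show (x + x * γ₁ x) - x = x * γ₁ x by ring,
        show (x + x * γ₂ x) - x = x * γ₂ x by ring]
      exact hq x hx
    have hc := deriv_const_on_span g hconv hx hy₁ hy₂ h1 h2 h12 heq'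
    rw [hc t ht, hc t' ht']
  -- local constancy of deriv g
  have key : ∀ s ∈ Set.Ioi (0:ℝ), ∃ u v : ℝ, 0 < u ∧ u < s ∧ s < v ∧
      ∀ t ∈ Set.Ioo u v, deriv g t = deriv g s := by
    intro s hs
    have hspos : (0:ℝ) < s := hs
    have hγcont : ContinuousAt γ₁ s := hγ₁cont.continuousAt (Ioi_mem_nhds hspos)
    have hF : ContinuousAt (fun x => x + x * γ₁ x) s :=
      continuousAt_id.add (continuousAt_id.mul hγcont)
    have hpos_ev : ∀ᶠ x in nhds s, (0:ℝ) < x := eventually_gt_nhds hspos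
    rcases (hγ₁ne s hs).lt_or_gt with hneg | hpos
    · -- γ₁ s < 0 : pick x slightly above s
      have hFs : s + s * γ₁ s < s := by nlinarith
      have hev : ∀ᶠ x in nhds s, (fun x => x + x * γ₁ x) x < s :=
        hF.eventually (eventually_lt_nhds hFs)
      have hev' : ∀ᶠ x in nhdsWithin s (Set.Ioi s), (x + x * γ₁ x < s ∧ 0 < x) ∧ x ∈ Set.Ioi s :=
        ((eventually_nhdsWithin_of_eventually_nhds (hev.and hpos_ev)).and
          self_mem_nhdsWithin)
      obtain ⟨x, ⟨hFx, hxpos⟩, hxs⟩ := hev'.exists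
      refine ⟨min x (min (x + x * γ₁ x) (x + x * γ₂ x)),
        max x (max (x + x * γ₁ x) (x + x * γ₂ x)), ?_, ?_, ?_, ?_⟩
      · have hy₁ : (0:ℝ) < x + x * γ₁ x := by
          have := hγ₁gt x hxpos
          nlinarith
        have hy₂ : (0:ℝ) < x + x * γ₂ x := by
          have := hγ₂gt x hxpos
          nlinarith
        exact lt_min hxpos (lt_min hy₁ hy₂)
      · calc min x (min (x + x * γ₁ x) (x + x * γ₂ x))
            ≤ x + x * γ₁ x := le_trans (min_le_right _ _) (min_le_left _ _)
          _ < s := hFx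
      · calc s < x := hxs
          _ ≤ _ := le_max_left _ _
      · intro t ht
        have hsmem : s ∈ Set.Ioo (min x (min (x + x * γ₁ x) (x + x * γ₂ x)))
            (max x (max (x + x * γ₁ x) (x + x * γ₂ x))) := by
          constructor
          · exact lt_of_le_of_lt (le_trans (min_le_right _ _) (min_le_left _ _)) hFx
          · exact lt_of_lt_of_le hxs (le_max_left _ _)
        exact span x hxpos t ht s hsmem
    · -- γ₁ s > 0 : pick x slightly below s
      have hFs : s < s + s * γ₁ s := by nlinarith
      have hev : ∀ᶠ x in nhds s, s < (fun x => x + x * γ₁ x) x :=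
        hF.eventually (eventually_gt_nhds hFs)
      have hev' : ∀ᶠ x in nhdsWithin s (Set.Iio s), (s < x + x * γ₁ x ∧ 0 < x) ∧ x ∈ Set.Iio s :=
        ((eventually_nhdsWithin_of_eventually_nhds (hev.and hpos_ev)).and
          self_mem_nhdsWithin)
      obtain ⟨x, ⟨hFx, hxpos⟩, hxs⟩ := hev'.exists
      refine ⟨min x (min (x + x * γ₁ x) (x + x * γ₂ x)),
        max x (max (x + x * γ₁ x) (x + x * γ₂ x)), ?_, ?_, ?_, ?_⟩
      · have hy₁ : (0:ℝ) < x + x * γ₁ x := by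
          have := hγ₁gt x hxpos
          nlinarith
        have hy₂ : (0:ℝ) < x + x * γ₂ x := by
          have := hγ₂gt x hxpos
          nlinarith
        exact lt_min hxpos (lt_min hy₁ hy₂)
      · exact lt_of_le_of_lt (min_le_left _ _) hxs
      · calc s < x + x * γ₁ x := hFx
          _ ≤ _ := le_trans (le_max_left _ _) (le_max_right _ _)
      · intro t ht
        have hsmem : s ∈ Set.Ioo (min x (min (x + x * γ₁ x) (x + x * γ₂ x)))
            (max x (max (x + x * γ₁ x) (x + x * γ₂ x))) := by
          constructor
          · exact lt_of_le_of_lt (min_le_left _ _) hxs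
          · exact lt_of_lt_of_le hFx (le_trans (le_max_left _ _) (le_max_right _ _))
        exact span x hxpos t ht s hsmem
  -- global constancy of deriv g on Ioi 0 by connectedness
  set b : ℝ := deriv g 1 with hb_def
  have hone : (1:ℝ) ∈ Set.Ioi (0:ℝ) := by norm_num
  have hb : ∀ t ∈ Set.Ioi (0:ℝ), deriv g t = b := by
    intro t ht
    by_contra hcon
    have hA : IsOpen {z : ℝ | z ∈ Set.Ioi (0:ℝ) ∧ deriv g z = b} := by
      rw [isOpen_iff_mem_nhds]
      rintro z ⟨hz1, hz2⟩
      obtain ⟨u, v, hu0, huz, hzv, hcst⟩ := key z hz1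
      exact Filter.mem_of_superset (Ioo_mem_nhds huz hzv)
        (fun w hw => ⟨lt_trans hu0 hw.1, (hcst w hw).trans hz2⟩)
    have hB : IsOpen {z : ℝ | z ∈ Set.Ioi (0:ℝ) ∧ deriv g z ≠ b} := by
      rw [isOpen_iff_mem_nhds]
      rintro z ⟨hz1, hz2⟩
      obtain ⟨u, v, hu0, huz, hzv, hcst⟩ := key z hz1
      exact Filter.mem_of_superset (Ioo_mem_nhds huz hzv)
        (fun w hw => ⟨lt_trans hu0 hw.1, by rw [hcst w hw]; exact hz2⟩)
    obtain ⟨w, _, hwA, hwB⟩ := isPreconnected_Ioi (a := (0:ℝ)) _ _ hA hB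
      (fun z hz => by by_cases h : deriv g z = b
                      · exact Or.inl ⟨hz, h⟩
                      · exact Or.inr ⟨hz, h⟩)
      ⟨1, hone, hone, rfl⟩ ⟨t, ht, ht, hcon⟩
    exact hwB.2 hwA.2
  -- conclude via MVT
  refine ⟨g 1 - b, b, ?_⟩
  intro s hs
  have hspos : (0:ℝ) < s := hs
  set m := min s 1 with hm
  set M := max s 1 with hM
  have hmpos : (0:ℝ) < m := lt_min hspos one_pos
  have hmem : ∀ z ∈ Set.Icc m M, z ∈ Set.Ioi (0:ℝ) := fun z hz => lt_of_lt_of_le hmpos hz.1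
  have hcont : ContinuousOn (fun z => g z - b * z) (Set.Icc m M) := fun z hz =>
    (((hdiff z (hmem z hz)).sub ((differentiableAt_id.const_mul b))).continuousAt).continuousWithinAt
  have hderiv : ∀ z ∈ Set.Ico m M, HasDerivWithinAt (fun z => g z - b * z) 0 (Set.Ici z) z := by
    intro z hz
    have hz' : z ∈ Set.Ioi (0:ℝ) := lt_of_lt_of_le hmpos hz.1
    have h1 : HasDerivAt (fun z => g z - b * z) (deriv g z - b) z := by
      have := ((hdiff z hz').hasDerivAt).sub (by simpa using (hasDerivAt_id z).const_mul b)
      exact this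
    rw [hb z hz', sub_self] at h1
    exact h1.hasDerivWithinAt
  have hconst := constant_of_has_deriv_right_zero hcont hderiv
  have hs' := hconst s ⟨min_le_left _ _, le_max_left _ _⟩
  have h1' := hconst 1 ⟨min_le_right _ _, le_max_right _ _⟩
  have : g s - b * s = g 1 - b * 1 := by rw [hs', h1']
  linarith
end
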